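/- For any three integers a, b, c, the integer (a−b)(b−c)(c−a) is a sum of two rational cubes. -/

import Mathlib

theorem stmt_12 (a b c : ℤ) :
    ∃ q₁ q₂ : ℚ, ((a - b)*(b - c)*(c - a) : ℤ) = q₁^3 + q₂^3 := by
  by_cases hab : a = b
  · exact ⟨0, 0, by simp [hab]⟩
  · set x : ℚ := (a : ℚ) - b with hx
    set y : ℚ := (c : ℚ) - b with hy
    have hx0 : x ≠ 0 := by
      simp only [hx, sub_ne_zero]
      exact_mod_cast hab
    have hd : x ^ 2 - x * y + y ^ 2 ≠ 0 := by
      have h1 : 0 < x ^ 2 := by positivity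
      nlinarith [sq_nonneg (2 * x - y), sq_nonneg y]
    refine ⟨(-x^3 + 6*x^2*y - 3*x*y^2 - y^3) / (3 * (x ^ 2 - x * y + y ^ 2)),
            (x^3 + 3*x^2*y - 6*x*y^2 + y^3) / (3 * (x ^ 2 - x * y + y ^ 2)), ?_⟩
    have : ((a - b) * (b - c) * (c - a) : ℤ) = (x * y * (x - y) : ℚ) := by
      push_cast [hx, hy]; ring
    rw [this]
    rw [div_pow, div_pow, ← add_div, eq_div_iff (pow_ne_zero 3 (mul_ne_zero three_ne_zero hd))]
    ring
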